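/- Let Q be a multiplicative lattice with 1 compact, and suppose 1 = ⋁_{i=1}^n a_i where each a_i is completely strongly hollow. Then Q has at most n maximal elements (Q is semi-local). -/

import Mathlib

/-- A multiplicative lattice: a complete lattice with a commutative, associative
multiplication distributing over arbitrary joins, with the top element as identity. -/
class MulLattice (Q : Type*) extends CompleteLattice Q, CommMonoid Q where
  mul_sSup : ∀ (a : Q) (s : Set Q), a * sSup s = ⨆ x ∈ s, a * x
  one_eq_top : (1 : Q) = ⊤

section OrderDefs
variable {Q : Type*} [CompleteLattice Q]

/-- `a` is strongly hollow if `a ≤ j ⊔ k` implies `a ≤ j` or `a ≤ k`. -/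
def StronglyHollow (a : Q) : Prop := ∀ j k : Q, a ≤ j ⊔ k → a ≤ j ∨ a ≤ k

/-- `a` is completely strongly hollow if whenever `a` is below an arbitrary join,
it is below one of the joinands. -/
def CompletelyStronglyHollow (a : Q) : Prop :=
  ∀ s : Set Q, a ≤ sSup s → ∃ x ∈ s, a ≤ x

/-- `κ(a)` is the join of all elements not above `a`. -/
def kappa (a : Q) : Q := sSup {k : Q | ¬ a ≤ k}

end OrderDefs

/-- The mlResidual `(a : b)`. -/
def mlResidual {Q : Type*} [MulLattice Q] (a b : Q) : Q := sSup {x : Q | x * b ≤ a}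

/-- The December 2024 Mathlib definition of a compact element of a complete lattice. -/
def CompleteLattice.IsCompactElement {α : Type*} [CompleteLattice α] (k : α) :=
  ∀ s : Set α, k ≤ sSup s → ∃ t : Finset α, ↑t ⊆ s ∧ k ≤ t.sup id

theorem stmt16 {Q : Type*} [MulLattice Q] {n : ℕ}
    (hc : CompleteLattice.IsCompactElement (1 : Q))
    (a : Fin n → Q) (ha : ∀ i, CompletelyStronglyHollow (a i))
    (hrep : (1 : Q) = ⨆ i, a i) :
    ∃ S : Finset Q, S.card ≤ n ∧ ∀ m : Q, IsCoatom m → m ∈ S := by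
  classical
  -- For each i, there is at most one coatom m with ¬ a i ≤ m
  have uniq : ∀ i : Fin n, ∀ m₁ m₂ : Q, IsCoatom m₁ → IsCoatom m₂ →
      ¬ a i ≤ m₁ → ¬ a i ≤ m₂ → m₁ = m₂ := by
    intro i m₁ m₂ h1 h2 hn1 hn2
    by_contra hne
    have hm2 : ¬ m₂ ≤ m₁ := by
      intro hle
      rcases lt_or_eq_of_le hle with h | h
      · exact h1.1 (h2.2 _ h)
      · exact hne h.symm
    have hsup : m₁ ⊔ m₂ = ⊤ :=
      h1.2 _ (lt_of_le_of_ne le_sup_left (fun h => hm2 (h ▸ le_sup_right)))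
    have hle : a i ≤ sSup {m₁, m₂} := by
      rw [sSup_pair, hsup]; exact le_top
    rcases ha i _ hle with ⟨x, hx, hax⟩
    rcases hx with h | h
    · exact hn1 (h ▸ hax)
    · exact hn2 (h ▸ hax)
  -- Every coatom avoids some a i
  have exi : ∀ m : Q, IsCoatom m → ∃ i, ¬ a i ≤ m := by
    intro m hm
    by_contra h
    push_neg at h
    have : (1 : Q) ≤ m := hrep ▸ iSup_le h
    exact hm.1 (top_le_iff.mp ((MulLattice.one_eq_top (Q := Q)) ▸ this))
  -- choice function
  set g : Fin n → Q := fun i =>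
    if h : ∃ m : Q, IsCoatom m ∧ ¬ a i ≤ m then h.choose else ⊥ with hg
  refine ⟨Finset.image g Finset.univ, ?_, ?_⟩
  · calc (Finset.image g Finset.univ).card ≤ Finset.univ.card :=
        Finset.card_image_le
      _ = n := by simp
  · intro m hm
    obtain ⟨i, hi⟩ := exi m hm
    have hex : ∃ m' : Q, IsCoatom m' ∧ ¬ a i ≤ m' := ⟨m, hm, hi⟩
    have hgi : g i = hex.choose := by simp [hg, dif_pos hex]
    have hspec := hex.choose_spec
    have : g i = m := by
      rw [hgi]
      exact uniq i _ _ hspec.1 hm hspec.2 hi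
    exact Finset.mem_image.mpr ⟨i, Finset.mem_univ i, this⟩
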